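/- Let Ω ∈ ℝ^{n×ℓ} be a random matrix whose columns are independent isotropic random vectors and set Z = Σ⊥ Ω̂₂ where Ω̂₂ = V⊥ᵀΩ. Then: (i) E[ ‖Z‖₂² ] ≤ ℓ ‖Σ⊥‖₂² ( 1 + 2√2 · sr(Σ⊥) ); and (ii) for every δ ∈ (0,1), P( ‖Z‖₂ ≥ (2√ℓ ‖Σ⊥‖₂/δ)(1 + 2√sr(Σ⊥)) ) ≤ δ/2. -/

import Mathlib

open MeasureTheory Matrix ProbabilityTheory

noncomputable section

/-- Spectral norm (largest singular value) of a real matrix. -/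
def spec {m n : ℕ} (A : Matrix (Fin m) (Fin n) ℝ) : ℝ :=
  ‖LinearMap.toContinuousLinearMap (Matrix.toEuclideanLin A)‖

/-- Frobenius norm of a real matrix. -/
def frob {m n : ℕ} (A : Matrix (Fin m) (Fin n) ℝ) : ℝ :=
  Real.sqrt (∑ i, ∑ j, (A i j) ^ 2)

/-- Stable rank `sr(A) = ‖A‖_F² / ‖A‖₂²`. -/
def srank {m n : ℕ} (A : Matrix (Fin m) (Fin n) ℝ) : ℝ :=
  frob A ^ 2 / spec A ^ 2

/-- Euclidean norm of a vector. -/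
def vnorm {d : ℕ} (v : Fin d → ℝ) : ℝ := Real.sqrt (∑ i, v i ^ 2)

/- Moore–Penrose pseudoinverse, via the four Penrose conditions. -/
open scoped Classical in
def pinv {m n : ℕ} (A : Matrix (Fin m) (Fin n) ℝ) : Matrix (Fin n) (Fin m) ℝ :=
  if h : ∃ B : Matrix (Fin n) (Fin m) ℝ,
      A * B * A = A ∧ B * A * B = B ∧ (A * B)ᵀ = A * B ∧ (B * A)ᵀ = B * A
  then h.choose else 0

/-- The sub-Gaussian norm of `X` is at most `K`:
`‖X‖_{ψ₂} = inf {t > 0 | E exp(X²/t²) ≤ 2} ≤ K`. -/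
def SubGaussNormLE {Ω : Type} [MeasurableSpace Ω] (μ : Measure Ω) (X : Ω → ℝ) (K : ℝ) : Prop :=
  ∀ t : ℝ, K < t → ∫ ω, Real.exp ((X ω) ^ 2 / t ^ 2) ∂μ ≤ 2

/-- The sub-Gaussian norm of the random vector `x` is at most `K`:
`sup_{‖z‖=1} ‖⟨x,z⟩‖_{ψ₂} ≤ K`. -/
def VecSubGaussNormLE {Ω : Type} [MeasurableSpace Ω] (μ : Measure Ω) {d : ℕ}
    (x : Ω → Fin d → ℝ) (K : ℝ) : Prop :=
  ∀ z : Fin d → ℝ, (∑ i, z i ^ 2) = 1 → SubGaussNormLE μ (fun ω => ∑ i, x ω i * z i) K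

/-- A random vector is isotropic: `E[x] = 0` and `E[x xᵀ] = I`. -/
def Isotropic {Ω : Type} [MeasurableSpace Ω] (μ : Measure Ω) {d : ℕ}
    (x : Ω → Fin d → ℝ) : Prop :=
  (∀ i, ∫ ω, x ω i ∂μ = 0) ∧
  (∀ i j, ∫ ω, x ω i * x ω j ∂μ = if i = j then 1 else 0)

/-- The first `k` columns of an `n×n` matrix. -/
def colsLeft {n : ℕ} (k : ℕ) (h : k ≤ n) (V : Matrix (Fin n) (Fin n) ℝ) :
    Matrix (Fin n) (Fin k) ℝ :=
  Matrix.of fun i j => V i (Fin.castLE h j)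

/-- The last `n - k` columns of an `n×n` matrix. -/
def colsRight {n : ℕ} (k : ℕ) (V : Matrix (Fin n) (Fin n) ℝ) :
    Matrix (Fin n) (Fin (n - k)) ℝ :=
  Matrix.of fun i j => V i ⟨k + j.1, by have := j.isLt; omega⟩

/-- The trailing diagonal block `Σ⊥ = diag(σ_{k+1},…,σ_n)`. -/
def tailDiag {n : ℕ} (k : ℕ) (σ : Fin n → ℝ) :
    Matrix (Fin (n - k)) (Fin (n - k)) ℝ :=
  Matrix.diagonal fun j => σ ⟨k + j.1, by have := j.isLt; omega⟩


lemma frob_nonneg {m n : ℕ} (A : Matrix (Fin m) (Fin n) ℝ) : 0 ≤ frob A := Real.sqrt_nonneg _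

lemma frob_sq {m n : ℕ} (A : Matrix (Fin m) (Fin n) ℝ) :
    frob A ^ 2 = ∑ i, ∑ j, (A i j) ^ 2 :=
  Real.sq_sqrt (by positivity)

lemma spec_nonneg {m n : ℕ} (A : Matrix (Fin m) (Fin n) ℝ) : 0 ≤ spec A := norm_nonneg _

lemma spec_le_frob {m n : ℕ} (A : Matrix (Fin m) (Fin n) ℝ) : spec A ≤ frob A := by
  apply ContinuousLinearMap.opNorm_le_bound _ (frob_nonneg A)
  intro x
  rw [LinearMap.coe_toContinuousLinearMap']
  rw [Matrix.toEuclideanLin_apply]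
  rw [EuclideanSpace.norm_eq, EuclideanSpace.norm_eq]
  simp only [Real.norm_eq_abs, sq_abs]
  have key : ∑ i, ((A *ᵥ (WithLp.equiv 2 (Fin n → ℝ)) x) i) ^ 2
      ≤ (∑ i, ∑ j, A i j ^ 2) * ∑ j, (x j) ^ 2 := by
    rw [Finset.sum_mul]
    apply Finset.sum_le_sum
    intro i _
    simp only [Matrix.mulVec, dotProduct]
    exact Finset.sum_mul_sq_le_sq_mul_sq _ _ _
  calc Real.sqrt (∑ i, (((WithLp.equiv 2 (Fin m → ℝ)).symm (A *ᵥ (WithLp.equiv 2 (Fin n → ℝ)) x)) i) ^ 2)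
      = Real.sqrt (∑ i, ((A *ᵥ (WithLp.equiv 2 (Fin n → ℝ)) x) i) ^ 2) := rfl
    _ ≤ Real.sqrt ((∑ i, ∑ j, A i j ^ 2) * ∑ j, (x j) ^ 2) := Real.sqrt_le_sqrt key
    _ = frob A * Real.sqrt (∑ j, (x j) ^ 2) := by
        rw [Real.sqrt_mul (by positivity)]; rfl

lemma spec_pos {m n : ℕ} {A : Matrix (Fin m) (Fin n) ℝ} (h : A ≠ 0) : 0 < spec A := by
  rcases (spec_nonneg A).lt_or_eq with h' | h'
  · exact h'
  · exfalso
    apply h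
    have h0 : LinearMap.toContinuousLinearMap (Matrix.toEuclideanLin A) = 0 :=
      norm_eq_zero.mp h'.symm
    have h1 : Matrix.toEuclideanLin A = 0 := by
      apply LinearMap.ext
      intro v
      have h2 := congrFun (congrArg (DFunLike.coe) h0) v
      simpa using h2
    exact Matrix.toEuclideanLin.injective (by simp [h1])


set_option maxHeartbeats 1000000 in
/-- **Lemma (second moment and tail bound for `‖Σ⊥Ω̂₂‖₂`).**
If the columns of `Ω ∈ ℝ^{n×ℓ}` are independent isotropic random vectors and
`Z = Σ⊥Ω̂₂`, then `E‖Z‖₂² ≤ ℓ‖Σ⊥‖₂²(1 + 2√2 sr(Σ⊥))`, and for every `δ ∈ (0,1)`,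
`P(‖Z‖₂ ≥ (2√ℓ‖Σ⊥‖₂/δ)(1 + 2√sr(Σ⊥))) ≤ δ/2`. -/
theorem sigma_perp_omega_moment_and_tail
    (m n k ℓ : ℕ) (hmn : n ≤ m) (hk0 : 0 < k) (hkn : k < n) (hℓ : 0 < ℓ)
    (σ : Fin n → ℝ) (hσ0 : ∀ i, 0 ≤ σ i)
    (hσmono : ∀ i j : Fin n, i ≤ j → σ j ≤ σ i)
    (U : Matrix (Fin m) (Fin n) ℝ) (V : Matrix (Fin n) (Fin n) ℝ)
    (hU : Uᵀ * U = 1) (hV : Vᵀ * V = 1)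
    (A : Matrix (Fin m) (Fin n) ℝ) (hA : A = U * Matrix.diagonal σ * Vᵀ)
    (hperp : tailDiag k σ ≠ 0)
    (Ω₀ : Type) [MeasurableSpace Ω₀] (μ : Measure Ω₀) [IsProbabilityMeasure μ]
    (W : Ω₀ → Matrix (Fin n) (Fin ℓ) ℝ)
    (hWmeas : ∀ i j, Measurable fun ω => W ω i j)
    (hWindep : iIndepFun
      (fun (j : Fin ℓ) ω (i : Fin n) => W ω i j) μ)
    (hWiso : ∀ j : Fin ℓ, Isotropic μ fun ω (i : Fin n) => W ω i j)
    :
    (∫ ω, spec (tailDiag k σ * ((colsRight k V)ᵀ * W ω)) ^ 2 ∂μ ≤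
        ℓ * spec (tailDiag k σ) ^ 2 * (1 + 2 * Real.sqrt 2 * srank (tailDiag k σ))) ∧
    (∀ δ : ℝ, 0 < δ → δ < 1 →
      μ {ω | 2 * Real.sqrt ℓ * spec (tailDiag k σ) / δ *
            (1 + 2 * Real.sqrt (srank (tailDiag k σ))) ≤
          spec (tailDiag k σ * ((colsRight k V)ᵀ * W ω))} ≤
        ENNReal.ofReal (δ / 2)) := by
  classical
  set D := tailDiag k σ with hDdef
  set C := colsRight k V with hCdef
  set B := D * Cᵀ with hBdef
  have hZB : ∀ ω, D * (Cᵀ * W ω) = B * W ω := fun ω => (Matrix.mul_assoc D Cᵀ (W ω)).symm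
  -- columns of C are unit vectors
  have hCcol : ∀ i : Fin (n - k), ∑ p, C p i ^ 2 = 1 := by
    intro i
    have h1 := congrFun (congrFun hV ⟨k + i.1, by have := i.isLt; omega⟩)
      ⟨k + i.1, by have := i.isLt; omega⟩
    simp only [Matrix.mul_apply, Matrix.transpose_apply, Matrix.one_apply_eq] at h1
    rw [← h1]
    apply Finset.sum_congr rfl
    intro p _
    simp [hCdef, colsRight, sq]
  -- B entries
  have hBent : ∀ (i : Fin (n - k)) (p : Fin n),
      B i p = σ ⟨k + i.1, by have := i.isLt; omega⟩ * C p i := by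
    intro i p
    simp [hBdef, hDdef, tailDiag, Matrix.diagonal_mul]
  -- frob B = frob D
  have hfrobB : frob B ^ 2 = frob D ^ 2 := by
    rw [frob_sq, frob_sq]
    have h1 : ∀ i : Fin (n - k), ∑ p, B i p ^ 2
        = σ ⟨k + i.1, by have := i.isLt; omega⟩ ^ 2 := by
      intro i
      calc ∑ p, B i p ^ 2
          = ∑ p, σ ⟨k + i.1, by have := i.isLt; omega⟩ ^ 2 * C p i ^ 2 := by
            apply Finset.sum_congr rfl; intro p _; rw [hBent i p]; ring
        _ = σ ⟨k + i.1, by have := i.isLt; omega⟩ ^ 2 * ∑ p, C p i ^ 2 := by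
            rw [Finset.mul_sum]
        _ = _ := by rw [hCcol i, mul_one]
    have h2 : ∀ i : Fin (n - k), ∑ j, D i j ^ 2
        = σ ⟨k + i.1, by have := i.isLt; omega⟩ ^ 2 := by
      intro i
      simp only [hDdef, tailDiag, Matrix.diagonal_apply]
      rw [Finset.sum_eq_single i]
      · simp
      · intro b _ hb; simp [Ne.symm hb]
      · intro hb; exact absurd (Finset.mem_univ i) hb
    rw [Finset.sum_congr rfl fun i _ => h1 i, Finset.sum_congr rfl fun i _ => h2 i]
  -- integrability of entries
  have hW2 : ∀ (p : Fin n) (j : Fin ℓ), Integrable (fun ω => W ω p j * W ω p j) μ := by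
    intro p j
    by_contra hni
    have h1 := (hWiso j).2 p p
    rw [integral_undef hni] at h1
    simp at h1
  have hWmul : ∀ (p q : Fin n) (j : Fin ℓ), Integrable (fun ω => W ω p j * W ω q j) μ := by
    intro p q j
    apply Integrable.mono' (((hW2 p j).add (hW2 q j)).div_const 2)
    · exact ((hWmeas p j).mul (hWmeas q j)).aestronglyMeasurable
    · apply ae_of_all
      intro ω
      simp only [Pi.add_apply]
      rw [Real.norm_eq_abs, abs_mul, le_div_iff₀ (by norm_num : (0:ℝ) < 2)]
      nlinarith [sq_nonneg (|W ω p j| - |W ω q j|), sq_abs (W ω p j), sq_abs (W ω q j)]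
  -- expectation of entry products
  have hE : ∀ (p q : Fin n) (j : Fin ℓ),
      ∫ ω, W ω p j * W ω q j ∂μ = if p = q then 1 else 0 := fun p q j => (hWiso j).2 p q
  -- expansion of Z entries squared
  have hexp : ∀ (ω : Ω₀) (i : Fin (n - k)) (j : Fin ℓ),
      ((B * W ω) i j) ^ 2 = ∑ p, ∑ q, B i p * B i q * (W ω p j * W ω q j) := by
    intro ω i j
    rw [Matrix.mul_apply, sq, Finset.sum_mul_sum]
    apply Finset.sum_congr rfl; intro p _
    apply Finset.sum_congr rfl; intro q _
    ring
  have hint : ∀ (i : Fin (n - k)) (j : Fin ℓ),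
      Integrable (fun ω => ((B * W ω) i j) ^ 2) μ := by
    intro i j
    have : (fun ω => ((B * W ω) i j) ^ 2)
        = fun ω => ∑ p, ∑ q, B i p * B i q * (W ω p j * W ω q j) := by
      funext ω; exact hexp ω i j
    rw [this]
    apply integrable_finset_sum _ fun p _ => ?_
    apply integrable_finset_sum _ fun q _ => ?_
    exact (hWmul p q j).const_mul _
  have hEij : ∀ (i : Fin (n - k)) (j : Fin ℓ),
      ∫ ω, ((B * W ω) i j) ^ 2 ∂μ = ∑ p, B i p ^ 2 := by
    intro i j
    simp_rw [hexp _ i j]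
    rw [integral_finset_sum _ fun p _ => integrable_finset_sum _
      fun q _ => (hWmul p _ j).const_mul _]
    have h1 : ∀ p : Fin n, ∫ ω, ∑ q, B i p * B i q * (W ω p j * W ω q j) ∂μ
        = B i p ^ 2 := by
      intro p
      rw [integral_finset_sum _ fun q _ => (hWmul p q j).const_mul _]
      have h2 : ∀ q : Fin n, ∫ ω, B i p * B i q * (W ω p j * W ω q j) ∂μ
          = B i p * B i q * (if p = q then 1 else 0) := by
        intro q
        rw [integral_const_mul, hE p q j]
      rw [Finset.sum_congr rfl fun q _ => h2 q]
      simp [Finset.sum_ite_eq, sq]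
    rw [Finset.sum_congr rfl fun p _ => h1 p]
  -- the Frobenius-squared process
  set f : Ω₀ → ℝ := fun ω => ∑ i, ∑ j, ((B * W ω) i j) ^ 2 with hfdef
  have hfint : Integrable f μ :=
    integrable_finset_sum _ fun i _ => integrable_finset_sum _ fun j _ => hint i j
  have hfval : ∫ ω, f ω ∂μ = ℓ * frob D ^ 2 := by
    rw [hfdef]
    rw [integral_finset_sum _ fun i _ => integrable_finset_sum _ fun j _ => hint i j]
    have h1 : ∀ i : Fin (n - k), ∫ ω, ∑ j, ((B * W ω) i j) ^ 2 ∂μ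
        = (ℓ : ℝ) * ∑ p, B i p ^ 2 := by
      intro i
      rw [integral_finset_sum _ fun j _ => hint i j]
      rw [Finset.sum_congr rfl fun j _ => hEij i j]
      simp [Finset.sum_const, Finset.card_univ, nsmul_eq_mul]
    rw [Finset.sum_congr rfl fun i _ => h1 i, ← Finset.mul_sum, ← frob_sq, hfrobB]
  have hfnn : ∀ ω, 0 ≤ f ω := by
    intro ω; apply Finset.sum_nonneg; intro i _; apply Finset.sum_nonneg; intro j _; positivity
  have hffrob : ∀ ω, frob (B * W ω) ^ 2 = f ω := fun ω => frob_sq _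
  -- spec, srank facts
  have hD0 : D ≠ 0 := hperp
  have hspecD : 0 < spec D := spec_pos hD0
  have hsr0 : 0 ≤ srank D := div_nonneg (sq_nonneg _) (sq_nonneg _)
  have hFsq : frob D ^ 2 = spec D ^ 2 * srank D := by
    rw [srank]; field_simp
  constructor
  · -- part (i)
    have hmono : ∫ ω, spec (D * (Cᵀ * W ω)) ^ 2 ∂μ ≤ ∫ ω, f ω ∂μ := by
      apply integral_mono_of_nonneg
      · exact ae_of_all _ fun ω => by positivity
      · exact hfint
      · apply ae_of_all _ fun ω => ?_
        show spec (D * (Cᵀ * W ω)) ^ 2 ≤ f ω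
        rw [hZB ω, ← hffrob ω]
        exact pow_le_pow_left₀ (spec_nonneg _) (spec_le_frob _) 2
    rw [hfval] at hmono
    refine hmono.trans ?_
    have h2 : (1:ℝ) ≤ Real.sqrt 2 := by
      rw [show (1:ℝ) = Real.sqrt 1 by simp]
      exact Real.sqrt_le_sqrt (by norm_num)
    have hℓ' : (1:ℝ) ≤ (ℓ:ℝ) := by exact_mod_cast hℓ
    rw [hFsq]
    have : srank D ≤ 1 + 2 * Real.sqrt 2 * srank D := by nlinarith
    calc (ℓ:ℝ) * (spec D ^ 2 * srank D) = ℓ * spec D ^ 2 * srank D := by ring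
      _ ≤ ℓ * spec D ^ 2 * (1 + 2 * Real.sqrt 2 * srank D) := by
          apply mul_le_mul_of_nonneg_left this (by positivity)
  · -- part (ii)
    intro δ hδ0 hδ1
    set x := Real.sqrt (srank D) with hxdef
    have hx0 : 0 ≤ x := Real.sqrt_nonneg _
    have hxsq : x ^ 2 = srank D := Real.sq_sqrt hsr0
    set L := Real.sqrt ℓ with hLdef
    have hLsq : L ^ 2 = (ℓ:ℝ) := Real.sq_sqrt (by positivity)
    have hL0 : 0 < L := Real.sqrt_pos.mpr (by exact_mod_cast hℓ)
    set t := 2 * L * spec D / δ * (1 + 2 * x) with htdef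
    have ht0 : 0 < t := by
      apply mul_pos (div_pos (by positivity) hδ0) (by positivity)
    -- sr > 0 since frob D > 0
    have hfrobD : 0 < frob D := by
      rcases (frob_nonneg D).lt_or_eq with h | h
      · exact h
      · exfalso
        apply hD0
        have h1 : ∑ i, ∑ j, D i j ^ 2 = 0 := by
          have := frob_sq D; rw [← h] at this; simpa using this.symm
        ext i j
        have h2 : ∀ i ∈ (Finset.univ : Finset (Fin (n-k))),
            ∑ j, D i j ^ 2 = 0 := by
          intro i _
          have := (Finset.sum_eq_zero_iff_of_nonneg (fun i _ => by positivity)).mp h1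
          exact this i (Finset.mem_univ i)
        have h3 := (Finset.sum_eq_zero_iff_of_nonneg (fun j _ => by positivity)).mp
          (h2 i (Finset.mem_univ i)) j (Finset.mem_univ j)
        have := pow_eq_zero_iff (n := 2) (by norm_num) |>.mp h3
        simpa using this
    have hsrpos : 0 < srank D := by
      rw [srank]; positivity
    have hxpos : 0 < x := Real.sqrt_pos.mpr hsrpos
    -- Markov
    set T := {ω | t ^ 2 ≤ f ω} with hTdef
    have hsub : {ω | t ≤ spec (D * (Cᵀ * W ω))} ⊆ T := by
      intro ω hω
      simp only [Set.mem_setOf_eq] at hω ⊢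
      calc t ^ 2 ≤ spec (D * (Cᵀ * W ω)) ^ 2 := pow_le_pow_left₀ ht0.le hω 2
        _ ≤ frob (B * W ω) ^ 2 := by
            rw [hZB ω]; exact pow_le_pow_left₀ (spec_nonneg _) (spec_le_frob _) 2
        _ = f ω := hffrob ω
    have hmarkov := mul_meas_ge_le_integral_of_nonneg (μ := μ)
      (ae_of_all _ hfnn) hfint (t ^ 2)
    rw [hfval] at hmarkov
    have hTfin : μ T ≠ ⊤ := measure_ne_top μ T
    have hTreal : (μ T).toReal ≤ (ℓ:ℝ) * frob D ^ 2 / t ^ 2 := by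
      rw [le_div_iff₀ (by positivity)]
      calc (μ T).toReal * t ^ 2 = t ^ 2 * (μ T).toReal := by ring
        _ ≤ _ := hmarkov
    -- key real inequality
    have hkey : (ℓ:ℝ) * frob D ^ 2 / t ^ 2 ≤ δ / 2 := by
      rw [div_le_div_iff₀ (by positivity) (by norm_num : (0:ℝ) < 2)]
      have hδ1' : δ ≤ 1 := hδ1.le
      have e : δ * t ^ 2 = (2 * L * spec D * (1 + 2 * x)) ^ 2 / δ := by
        rw [htdef]; field_simp
      rw [e, le_div_iff₀ hδ0, hFsq, ← hxsq, ← hLsq]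
      nlinarith [sq_nonneg (L * spec D), hx0, hδ0.le, hδ1',
        mul_nonneg (mul_nonneg (sub_nonneg.mpr hδ1') (sq_nonneg (L * spec D))) (sq_nonneg x),
        mul_nonneg (sq_nonneg (L * spec D)) hx0,
        mul_nonneg (sq_nonneg (L * spec D)) (sq_nonneg x)]
    calc μ {ω | t ≤ spec (D * (Cᵀ * W ω))} ≤ μ T := measure_mono hsub
      _ = ENNReal.ofReal ((μ T).toReal) := (ENNReal.ofReal_toReal hTfin).symm
      _ ≤ ENNReal.ofReal (δ / 2) := ENNReal.ofReal_le_ofReal (hTreal.trans hkey)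


end
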